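/- arXiv:2312.04601 — 2 statements merged into one kernel-verified Lean document; each statement's English description precedes it below -/
import Mathlib

section
/- Fréchet bound gap via conditional entropy: with Π the set of couplings matching the marginals P_{X,Z} and P_{Y,Z}, we have U − L ≤ sqrt(8‖g‖_∞² · min(H(X|Z), H(Y|Z))), where L = inf_{π∈Π} E_π[g], U = sup_{π∈Π} E_π[g], and H denotes conditional Shannon entropy under P. -/
open Finset

/-- derivative fact for F t = log t - 2(t-1)/(t+1) -/
lemma hasDerivF {t : ℝ} (ht : 0 < t) :
    HasDerivAt (fun s : ℝ => Real.log s - 2*(s-1)/(s+1)) (t⁻¹ - 4/(t+1)^2) t := by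
  have h1 : HasDerivAt Real.log t⁻¹ t := Real.hasDerivAt_log ht.ne'
  have hd : (t + 1) ≠ 0 := by linarith
  have h2 : HasDerivAt (fun s : ℝ => 2*(s-1)/(s+1))
      ((2*(t+1) - 2*(t-1)*1)/(t+1)^2) t := by
    have := (((hasDerivAt_id t).sub_const 1).const_mul 2).div
      ((hasDerivAt_id t).add_const 1) hd
    exact this.congr_deriv (by simp only [id_eq, mul_one])
  have := h1.sub h2
  refine this.congr_deriv ?_
  have h3 : ((2:ℝ)*(t+1) - 2*(t-1)*1)/(t+1)^2 = 4/(t+1)^2 := by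
    rw [div_eq_div_iff (by positivity) (by positivity)]
    ring
  rw [h3]

lemma log_ge_pade {t : ℝ} (ht : 1 ≤ t) : 2*(t-1)/(t+1) ≤ Real.log t := by
  set F := fun s : ℝ => Real.log s - 2*(s-1)/(s+1) with hF
  have hmono : MonotoneOn F (Set.Ici 1) := by
    apply monotoneOn_of_hasDerivWithinAt_nonneg (convex_Ici 1)
      (f' := fun s => s⁻¹ - 4/(s+1)^2)
    · apply ContinuousOn.sub
      · exact Real.continuousOn_log.mono (by intro x hx; simp at hx ⊢; linarith)
      · apply ContinuousOn.div (by fun_prop) (by fun_prop)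
        intro x hx; simp at hx; intro h; linarith
    · intro x hx
      rw [interior_Ici] at hx
      exact (hasDerivF (by simp at hx; linarith)).hasDerivWithinAt
    · intro x hx
      rw [interior_Ici] at hx
      simp only [Set.mem_Ioi] at hx
      have hx0 : (0:ℝ) < x := by linarith
      rw [sub_nonneg, div_le_iff₀ (by positivity), inv_mul_eq_div, le_div_iff₀ hx0]
      nlinarith [sq_nonneg (x-1)]
  have h0 : F 1 = 0 := by simp [hF]
  have := hmono (Set.mem_Ici.2 le_rfl) (Set.mem_Ici.2 ht) ht
  rw [h0] at this
  simpa [hF, sub_nonneg] using this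

lemma log_le_pade {t : ℝ} (ht0 : 0 < t) (ht : t ≤ 1) : Real.log t ≤ 2*(t-1)/(t+1) := by
  set F := fun s : ℝ => Real.log s - 2*(s-1)/(s+1) with hF
  have hmono : MonotoneOn F (Set.Ioc 0 1) := by
    apply monotoneOn_of_hasDerivWithinAt_nonneg (convex_Ioc 0 1)
      (f' := fun s => s⁻¹ - 4/(s+1)^2)
    · apply ContinuousOn.sub
      · exact Real.continuousOn_log.mono (by intro x hx; simp at hx ⊢; intro h; linarith [hx.1])
      · apply ContinuousOn.div (by fun_prop) (by fun_prop)
        intro x hx; simp at hx; intro h; linarith [hx.1]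
    · intro x hx
      rw [interior_Ioc] at hx
      exact (hasDerivF hx.1).hasDerivWithinAt
    · intro x hx
      rw [interior_Ioc] at hx
      have hx0 : (0:ℝ) < x := hx.1
      rw [sub_nonneg, div_le_iff₀ (by positivity), inv_mul_eq_div, le_div_iff₀ hx0]
      nlinarith [sq_nonneg (x-1)]
  have h0 : F 1 = 0 := by simp [hF]
  have := hmono (Set.mem_Ioc.2 ⟨ht0, ht⟩) (Set.mem_Ioc.2 ⟨one_pos, le_rfl⟩) ht
  rw [h0] at this
  have : F t ≤ 0 := this
  simpa [hF, sub_nonpos] using this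

lemma hasDerivH {t : ℝ} (ht : 0 < t) :
    HasDerivAt (fun s : ℝ => s * Real.log s - s + 1 - 3*(s-1)^2/(2*(s+2)))
      (Real.log t - 3*(t-1)*(t+5)/(2*(t+2)^2)) t := by
  have hd : (2*(t + 2)) ≠ 0 := by positivity
  have h1 : HasDerivAt (fun s : ℝ => s * Real.log s) (Real.log t + 1) t := by
    have := (hasDerivAt_id t).mul (Real.hasDerivAt_log ht.ne')
    refine this.congr_deriv ?_
    field_simp
    simp only [id_eq]
    ring
  have h2 : HasDerivAt (fun s : ℝ => 3*(s-1)^2/(2*(s+2)))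
      ((3*(2*(t-1))*(2*(t+2)) - 3*(t-1)^2*2)/(2*(t+2))^2) t := by
    have hnum : HasDerivAt (fun s : ℝ => 3*(s-1)^2) (3*(2*(t-1))) t := by
      have := (((hasDerivAt_id t).sub_const 1).pow 2).const_mul 3
      simpa using this
    have hden : HasDerivAt (fun s : ℝ => 2*(s+2)) 2 t := by
      have := ((hasDerivAt_id t).add_const 2).const_mul 2
      simpa using this
    exact hnum.div hden hd
  have := (h1.sub (hasDerivAt_id t)).add_const 1 |>.sub h2
  refine this.congr_deriv ?_
  have he : (3*(2*(t-1))*(2*(t+2)) - 3*(t-1)^2*2)/(2*(t+2))^2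
      = 3*(t-1)*(t+5)/(2*(t+2)^2) := by
    rw [div_eq_div_iff (by positivity) (by positivity)]
    ring
  rw [he]
  ring

lemma deriv_sign_ge {x : ℝ} (hx : 1 ≤ x) :
    0 ≤ Real.log x - 3*(x-1)*(x+5)/(2*(x+2)^2) := by
  have h1 : 2*(x-1)/(x+1) ≤ Real.log x := log_ge_pade hx
  have h2 : 3*(x-1)*(x+5)/(2*(x+2)^2) ≤ 2*(x-1)/(x+1) := by
    rw [div_le_div_iff₀ (by positivity) (by positivity)]
    nlinarith [sq_nonneg (x-1), sq_nonneg (x+2)]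
  linarith

lemma deriv_sign_le {x : ℝ} (hx0 : 0 < x) (hx : x ≤ 1) :
    Real.log x - 3*(x-1)*(x+5)/(2*(x+2)^2) ≤ 0 := by
  have h1 : Real.log x ≤ 2*(x-1)/(x+1) := log_le_pade hx0 hx
  have h2 : 2*(x-1)/(x+1) ≤ 3*(x-1)*(x+5)/(2*(x+2)^2) := by
    rw [div_le_div_iff₀ (by positivity) (by positivity)]
    nlinarith [sq_nonneg (x-1), sq_nonneg (x+2)]
  linarith

lemma pinsker_pointwise_t {t : ℝ} (ht : 0 < t) :
    3*(t-1)^2/(2*(t+2)) ≤ t * Real.log t - t + 1 := by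
  set h := fun s : ℝ => s * Real.log s - s + 1 - 3*(s-1)^2/(2*(s+2)) with hh
  have hcont : ∀ D : Set ℝ, D ⊆ Set.Ioi 0 → ContinuousOn h D := by
    intro D hD
    apply ContinuousOn.sub
    · apply ContinuousOn.add
      · apply ContinuousOn.sub
        · exact (continuousOn_id.mul (Real.continuousOn_log.mono
            (fun x hx => ne_of_gt (hD hx))))
        · exact continuousOn_id
      · exact continuousOn_const
    · apply ContinuousOn.div (by fun_prop) (by fun_prop)
      intro x hx
      have := hD hx
      simp at this
      positivity
  have key : 0 ≤ h t := by
    rcases le_total 1 t with h1 | h1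
    · have hmono : MonotoneOn h (Set.Ici 1) := by
        apply monotoneOn_of_hasDerivWithinAt_nonneg (convex_Ici 1)
          (hcont _ (fun x hx => by simp at hx ⊢; linarith))
          (f' := fun s => Real.log s - 3*(s-1)*(s+5)/(2*(s+2)^2))
        · intro x hx
          rw [interior_Ici] at hx
          simp at hx
          exact (hasDerivH (by linarith)).hasDerivWithinAt
        · intro x hx
          rw [interior_Ici] at hx
          simp at hx
          exact deriv_sign_ge hx.le
      have h0 : h 1 = 0 := by simp [hh]
      have := hmono (Set.mem_Ici.2 le_rfl) (Set.mem_Ici.2 h1) h1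
      rw [h0] at this; exact this
    · have hanti : AntitoneOn h (Set.Ioc 0 1) := by
        apply antitoneOn_of_hasDerivWithinAt_nonpos (convex_Ioc 0 1)
          (hcont _ (fun x hx => hx.1))
          (f' := fun s => Real.log s - 3*(s-1)*(s+5)/(2*(s+2)^2))
        · intro x hx
          rw [interior_Ioc] at hx
          exact (hasDerivH hx.1).hasDerivWithinAt
        · intro x hx
          rw [interior_Ioc] at hx
          exact deriv_sign_le hx.1 hx.2.le
      have h0 : h 1 = 0 := by simp [hh]
      have := hanti (Set.mem_Ioc.2 ⟨ht, h1⟩) (Set.mem_Ioc.2 ⟨one_pos, le_rfl⟩) h1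
      rw [h0] at this; exact this
  simp only [hh] at key
  linarith

lemma pinsker_pointwise {a b : ℝ} (ha : 0 ≤ a) (hb : 0 < b) :
    3*(a-b)^2/(2*(a+2*b)) ≤ a * Real.log (a/b) - a + b := by
  rcases eq_or_lt_of_le ha with h0 | ha'
  · have h1 : 3*((0:ℝ)-b)^2/(2*(0+2*b)) = 3*b/4 := by
      rw [div_eq_div_iff (by positivity) (by norm_num)]
      ring
    rw [← h0]
    rw [h1]
    simp
    linarith
  · have ht : 0 < a/b := div_pos ha' hb
    have H := pinsker_pointwise_t ht
    have h1 : a * Real.log (a/b) - a + b = b * ((a/b) * Real.log (a/b) - (a/b) + 1) := by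
      field_simp
    have h2 : 3*(a-b)^2/(2*(a+2*b)) = b * (3*((a/b)-1)^2/(2*((a/b)+2))) := by
      rw [eq_comm, mul_div_assoc']
      rw [div_eq_div_iff (by positivity) (by positivity)]
      field_simp
    rw [h1, h2]
    exact mul_le_mul_of_nonneg_left H hb.le
lemma finite_pinsker {ι : Type*} [Fintype ι] (μ ν : ι → ℝ)
    (hμ : ∀ i, 0 ≤ μ i) (hν : ∀ i, 0 ≤ ν i)
    (hzero : ∀ i, ν i = 0 → μ i = 0)
    (hsum : ∑ i, μ i = ∑ i, ν i) :
    (∑ i, |μ i - ν i|)^2 ≤ (2 * ∑ i, ν i) * ∑ i, μ i * Real.log (μ i / ν i) := by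
  classical
  set f : ι → ℝ := fun i => |μ i - ν i| / Real.sqrt (2*(μ i + 2*ν i)/3) with hf
  set G : ι → ℝ := fun i => Real.sqrt (2*(μ i + 2*ν i)/3) with hG
  have hfg : ∀ i, f i * G i = |μ i - ν i| := by
    intro i
    rcases eq_or_lt_of_le (by have := hμ i; have := hν i; linarith : (0:ℝ) ≤ μ i + 2*ν i) with h | h
    · have h1 : μ i = 0 := by nlinarith [hμ i, hν i]
      have h2 : ν i = 0 := by nlinarith [hμ i, hν i]
      simp [hf, hG, h1, h2]
    · have hs : Real.sqrt (2*(μ i + 2*ν i)/3) ≠ 0 :=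
        (Real.sqrt_pos.2 (by linarith)).ne'
      simp only [hf, hG]
      rw [div_mul_cancel₀ _ hs]
  have hG2 : ∑ i, (G i)^2 = 2 * ∑ i, ν i := by
    have : ∀ i, (G i)^2 = 2*(μ i + 2*ν i)/3 := fun i =>
      Real.sq_sqrt (by have := hμ i; have := hν i; linarith)
    rw [Finset.sum_congr rfl (fun i _ => this i)]
    rw [← Finset.sum_div, ← Finset.mul_sum]
    rw [Finset.sum_add_distrib, ← Finset.mul_sum, hsum]
    ring
  have hf2 : ∀ i, (f i)^2 ≤ μ i * Real.log (μ i / ν i) - μ i + ν i := by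
    intro i
    rcases eq_or_lt_of_le (hν i) with h | h
    · have h1 : μ i = 0 := hzero i h.symm
      simp [hf, h1, ← h]
    · have key := pinsker_pointwise (hμ i) h
      have hpos : (0:ℝ) < μ i + 2*ν i := by nlinarith [hμ i]
      have heq : (f i)^2 = 3*(μ i - ν i)^2/(2*(μ i + 2*ν i)) := by
        simp only [hf, div_pow, sq_abs]
        rw [Real.sq_sqrt (by positivity)]
        rw [div_eq_div_iff (by positivity) (by positivity)]
        ring
      rw [heq]
      linarith
  calc (∑ i, |μ i - ν i|)^2 = (∑ i, f i * G i)^2 := by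
        rw [Finset.sum_congr rfl (fun i _ => (hfg i).symm)]
    _ ≤ (∑ i, (f i)^2) * ∑ i, (G i)^2 :=
        Finset.sum_mul_sq_le_sq_mul_sq _ _ _
    _ ≤ (∑ i, (μ i * Real.log (μ i / ν i) - μ i + ν i)) * ∑ i, (G i)^2 := by
        apply mul_le_mul_of_nonneg_right (Finset.sum_le_sum (fun i _ => hf2 i))
        positivity
    _ = (2 * ∑ i, ν i) * ∑ i, μ i * Real.log (μ i / ν i) := by
        rw [hG2]
        have : ∑ i, (μ i * Real.log (μ i / ν i) - μ i + ν i)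
            = ∑ i, μ i * Real.log (μ i / ν i) := by
          rw [Finset.sum_add_distrib, Finset.sum_sub_distrib, hsum]
          ring
        rw [this]
        ring
lemma l1_bound {𝒳 𝒴 : Type*} [Fintype 𝒳] [Fintype 𝒴]
    (p : 𝒳 → ℝ) (q : 𝒴 → ℝ) (w : ℝ) (π : 𝒳 → 𝒴 → ℝ)
    (hπ0 : ∀ x y, 0 ≤ π x y)
    (hrow : ∀ x, ∑ y, π x y = p x)
    (hcol : ∀ y, ∑ x, π x y = q y)
    (hw : ∑ x, p x = w) (hw' : ∑ y, q y = w) (hwpos : 0 < w) :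
    ∑ i : 𝒳 × 𝒴, |π i.1 i.2 - p i.1 * q i.2 / w|
      ≤ Real.sqrt (2 * w * min (∑ x, p x * Real.log (w / p x))
          (∑ y, q y * Real.log (w / q y))) := by
  classical
  have hp0 : ∀ x, 0 ≤ p x := fun x =>
    (hrow x) ▸ Finset.sum_nonneg (fun y _ => hπ0 x y)
  have hq0 : ∀ y, 0 ≤ q y := fun y =>
    (hcol y) ▸ Finset.sum_nonneg (fun x _ => hπ0 x y)
  have hπp : ∀ x y, π x y ≤ p x := fun x y =>
    (hrow x) ▸ Finset.single_le_sum (fun y' _ => hπ0 x y') (Finset.mem_univ y)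
  have hπq : ∀ x y, π x y ≤ q y := fun x y =>
    (hcol y) ▸ Finset.single_le_sum (fun x' _ => hπ0 x' y) (Finset.mem_univ x)
  set μ : 𝒳 × 𝒴 → ℝ := fun i => π i.1 i.2 with hμdef
  set ν : 𝒳 × 𝒴 → ℝ := fun i => p i.1 * q i.2 / w with hνdef
  have hν0 : ∀ i, 0 ≤ ν i := fun i => by
    have := hp0 i.1; have := hq0 i.2; positivity
  have hzero : ∀ i, ν i = 0 → μ i = 0 := by
    intro i h
    simp only [hνdef, div_eq_zero_iff, mul_eq_zero] at h
    rcases h with (h | h) | h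
    · exact le_antisymm (h ▸ hπp i.1 i.2) (hπ0 i.1 i.2)
    · exact le_antisymm (h ▸ hπq i.1 i.2) (hπ0 i.1 i.2)
    · exact absurd h hwpos.ne'
  have hμsum : ∑ i, μ i = w := by
    rw [Fintype.sum_prod_type]
    rw [Finset.sum_congr rfl (fun x _ => hrow x)]
    exact hw
  have hνsum : ∑ i, ν i = w := by
    simp only [hνdef]
    rw [Fintype.sum_prod_type]
    have : ∀ x : 𝒳, ∑ y, p x * q y / w = p x * w / w := by
      intro x
      rw [← Finset.sum_div, ← Finset.mul_sum, hw']
    rw [Finset.sum_congr rfl (fun x _ => this x)]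
    have : ∀ x : 𝒳, p x * w / w = p x := fun x => by
      field_simp
    rw [Finset.sum_congr rfl (fun x _ => this x), hw]
  -- KL bounded by each entropy
  have hKLX : ∑ i, μ i * Real.log (μ i / ν i) ≤ ∑ x, p x * Real.log (w / p x) := by
    have hpt : ∀ i : 𝒳 × 𝒴, μ i * Real.log (μ i / ν i)
        ≤ μ i * Real.log (w / p i.1) := by
      intro i
      rcases eq_or_lt_of_le (hπ0 i.1 i.2) with h | h
      · simp only [hμdef, ← h, zero_mul]
        exact le_rfl
      · have hμpos : 0 < μ i := h
        have hppos : 0 < p i.1 := lt_of_lt_of_le h (hπp i.1 i.2)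
        have hqpos : 0 < q i.2 := lt_of_lt_of_le h (hπq i.1 i.2)
        apply mul_le_mul_of_nonneg_left _ hμpos.le
        rw [Real.log_div hμpos.ne' (by positivity),
            Real.log_div hwpos.ne' hppos.ne',
            hνdef]
        simp only
        rw [Real.log_div (by positivity) hwpos.ne',
            Real.log_mul hppos.ne' hqpos.ne']
        have : Real.log (μ i) ≤ Real.log (q i.2) :=
          Real.log_le_log hμpos (hπq i.1 i.2)
        linarith
    calc ∑ i, μ i * Real.log (μ i / ν i)
        ≤ ∑ i, μ i * Real.log (w / p i.1) := Finset.sum_le_sum (fun i _ => hpt i)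
      _ = ∑ x, p x * Real.log (w / p x) := by
          rw [Fintype.sum_prod_type]
          apply Finset.sum_congr rfl
          intro x _
          show (∑ y, μ (x, y) * Real.log (w / p x)) = p x * Real.log (w / p x)
          rw [← Finset.sum_mul]
          have hrx : ∑ y, μ (x, y) = p x := hrow x
          rw [hrx]
  have hKLY : ∑ i, μ i * Real.log (μ i / ν i) ≤ ∑ y, q y * Real.log (w / q y) := by
    have hpt : ∀ i : 𝒳 × 𝒴, μ i * Real.log (μ i / ν i)
        ≤ μ i * Real.log (w / q i.2) := by
      intro i
      rcases eq_or_lt_of_le (hπ0 i.1 i.2) with h | h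
      · simp only [hμdef, ← h, zero_mul]
        exact le_rfl
      · have hμpos : 0 < μ i := h
        have hppos : 0 < p i.1 := lt_of_lt_of_le h (hπp i.1 i.2)
        have hqpos : 0 < q i.2 := lt_of_lt_of_le h (hπq i.1 i.2)
        apply mul_le_mul_of_nonneg_left _ hμpos.le
        rw [Real.log_div hμpos.ne' (by positivity),
            Real.log_div hwpos.ne' hqpos.ne',
            hνdef]
        simp only
        rw [Real.log_div (by positivity) hwpos.ne',
            Real.log_mul hppos.ne' hqpos.ne']
        have : Real.log (μ i) ≤ Real.log (p i.1) :=
          Real.log_le_log hμpos (hπp i.1 i.2)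
        linarith
    calc ∑ i, μ i * Real.log (μ i / ν i)
        ≤ ∑ i, μ i * Real.log (w / q i.2) := Finset.sum_le_sum (fun i _ => hpt i)
      _ = ∑ y, q y * Real.log (w / q y) := by
          rw [Fintype.sum_prod_type_right]
          apply Finset.sum_congr rfl
          intro y _
          show (∑ x, μ (x, y) * Real.log (w / q y)) = q y * Real.log (w / q y)
          rw [← Finset.sum_mul]
          have hcy : ∑ x, μ (x, y) = q y := hcol y
          rw [hcy]
  have key := finite_pinsker μ ν (fun i => hπ0 i.1 i.2) hν0 hzero (by rw [hμsum, hνsum])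
  rw [hνsum] at key
  have hKL : ∑ i, μ i * Real.log (μ i / ν i)
      ≤ min (∑ x, p x * Real.log (w / p x)) (∑ y, q y * Real.log (w / q y)) :=
    le_min hKLX hKLY
  have habs : (0:ℝ) ≤ ∑ i : 𝒳 × 𝒴, |μ i - ν i| :=
    Finset.sum_nonneg (fun i _ => abs_nonneg _)
  have final : (∑ i, |μ i - ν i|)^2
      ≤ 2 * w * min (∑ x, p x * Real.log (w / p x)) (∑ y, q y * Real.log (w / q y)) :=
    le_trans key (mul_le_mul_of_nonneg_left hKL (by linarith))
  have hRHS0 : (0:ℝ) ≤ 2 * w * min (∑ x, p x * Real.log (w / p x))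
      (∑ y, q y * Real.log (w / q y)) := le_trans (sq_nonneg _) final
  exact (Real.le_sqrt habs hRHS0).2 final
lemma ent_nonneg {𝒳 : Type*} [Fintype 𝒳] (p : 𝒳 → ℝ) (w : ℝ)
    (hp0 : ∀ x, 0 ≤ p x) (hw : ∑ x, p x = w) :
    0 ≤ ∑ x, p x * Real.log (w / p x) := by
  apply Finset.sum_nonneg
  intro x _
  rcases eq_or_lt_of_le (hp0 x) with h | h
  · rw [← h, zero_mul]
  · apply mul_nonneg (hp0 x)
    apply Real.log_nonneg
    rw [le_div_iff₀ h, one_mul]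
    exact hw ▸ Finset.single_le_sum (fun x' _ => hp0 x') (Finset.mem_univ x)

theorem stmt14 {𝒳 𝒴 𝒵 : Type*} [Fintype 𝒳] [Fintype 𝒴] [Fintype 𝒵]
    (P : 𝒳 → 𝒴 → 𝒵 → ℝ) (hP0 : ∀ x y z, 0 ≤ P x y z)
    (hP1 : ∑ x, ∑ y, ∑ z, P x y z = 1)
    (hpZ : ∀ z, 0 < ∑ x, ∑ y, P x y z)
    (g : 𝒳 → 𝒴 → 𝒵 → ℝ) (C : ℝ) (hg : ∀ x y z, |g x y z| ≤ C) :
    sSup {r : ℝ | ∃ π : 𝒳 → 𝒴 → 𝒵 → ℝ, (∀ x y z, 0 ≤ π x y z) ∧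
        (∀ x z, ∑ y, π x y z = ∑ y, P x y z) ∧
        (∀ y z, ∑ x, π x y z = ∑ x, P x y z) ∧
        r = ∑ x, ∑ y, ∑ z, g x y z * π x y z}
    - sInf {r : ℝ | ∃ π : 𝒳 → 𝒴 → 𝒵 → ℝ, (∀ x y z, 0 ≤ π x y z) ∧
        (∀ x z, ∑ y, π x y z = ∑ y, P x y z) ∧
        (∀ y z, ∑ x, π x y z = ∑ x, P x y z) ∧
        r = ∑ x, ∑ y, ∑ z, g x y z * π x y z}
    ≤ Real.sqrt (8 * C^2 *
        min (∑ z, ∑ x, (∑ y, P x y z) *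
              Real.log ((∑ x', ∑ y', P x' y' z) / (∑ y, P x y z)))
            (∑ z, ∑ y, (∑ x, P x y z) *
              Real.log ((∑ x', ∑ y', P x' y' z) / (∑ x, P x y z)))) := by
  classical
  have hC0 : 0 ≤ C := by
    rcases isEmpty_or_nonempty 𝒳 with hX | ⟨⟨x0⟩⟩
    · exfalso; simp at hP1
    rcases isEmpty_or_nonempty 𝒴 with hY | ⟨⟨y0⟩⟩
    · exfalso; simp at hP1
    rcases isEmpty_or_nonempty 𝒵 with hZ | ⟨⟨z0⟩⟩
    · exfalso; simp at hP1
    exact le_trans (abs_nonneg _) (hg x0 y0 z0)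
  set S := {r : ℝ | ∃ π : 𝒳 → 𝒴 → 𝒵 → ℝ, (∀ x y z, 0 ≤ π x y z) ∧
        (∀ x z, ∑ y, π x y z = ∑ y, P x y z) ∧
        (∀ y z, ∑ x, π x y z = ∑ x, P x y z) ∧
        r = ∑ x, ∑ y, ∑ z, g x y z * π x y z} with hSdef
  set D := Real.sqrt (8 * C^2 *
        min (∑ z, ∑ x, (∑ y, P x y z) *
              Real.log ((∑ x', ∑ y', P x' y' z) / (∑ y, P x y z)))
            (∑ z, ∑ y, (∑ x, P x y z) *
              Real.log ((∑ x', ∑ y', P x' y' z) / (∑ x, P x y z)))) with hDdef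
  have reorder : ∀ f : 𝒳 → 𝒴 → 𝒵 → ℝ,
      ∑ x, ∑ y, ∑ z, f x y z = ∑ z, ∑ x, ∑ y, f x y z := by
    intro f
    calc ∑ x, ∑ y, ∑ z, f x y z
        = ∑ x, ∑ z, ∑ y, f x y z := Finset.sum_congr rfl (fun x _ => Finset.sum_comm)
      _ = ∑ z, ∑ x, ∑ y, f x y z := Finset.sum_comm
  have hKey : ∀ r₁ ∈ S, ∀ r₂ ∈ S, r₁ - r₂ ≤ D := by
    rintro r₁ ⟨π₁, hπ₁0, hπ₁r, hπ₁c, rfl⟩ r₂ ⟨π₂, hπ₂0, hπ₂r, hπ₂c, rfl⟩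
    set wz : 𝒵 → ℝ := fun z => ∑ x, ∑ y, P x y z with hwz
    set HXz : 𝒵 → ℝ := fun z => ∑ x, (∑ y, P x y z) *
        Real.log (wz z / (∑ y, P x y z)) with hHX
    set HYz : 𝒵 → ℝ := fun z => ∑ y, (∑ x, P x y z) *
        Real.log (wz z / (∑ x, P x y z)) with hHY
    set Kz : 𝒵 → ℝ := fun z => min (HXz z) (HYz z) with hKzdef
    have hw0 : ∀ z, 0 < wz z := hpZ
    have hHX0 : ∀ z, 0 ≤ HXz z := fun z =>
      ent_nonneg (fun x => ∑ y, P x y z) (wz z)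
        (fun x => Finset.sum_nonneg (fun y _ => hP0 x y z)) rfl
    have hHY0 : ∀ z, 0 ≤ HYz z := fun z =>
      ent_nonneg (fun y => ∑ x, P x y z) (wz z)
        (fun y => Finset.sum_nonneg (fun x _ => hP0 x y z)) Finset.sum_comm
    have hK0 : ∀ z, 0 ≤ Kz z := fun z => le_min (hHX0 z) (hHY0 z)
    have hL1 : ∀ (π : 𝒳 → 𝒴 → 𝒵 → ℝ), (∀ x y z, 0 ≤ π x y z) →
        (∀ x z, ∑ y, π x y z = ∑ y, P x y z) →
        (∀ y z, ∑ x, π x y z = ∑ x, P x y z) → ∀ z : 𝒵,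
        ∑ i : 𝒳 × 𝒴, |π i.1 i.2 z - (∑ y, P i.1 y z) * (∑ x, P x i.2 z) / wz z|
          ≤ Real.sqrt (2 * wz z * Kz z) := by
      intro π h0 hr hc z
      exact l1_bound (fun x => ∑ y, P x y z) (fun y => ∑ x, P x y z) (wz z)
        (fun x y => π x y z) (fun x y => h0 x y z) (fun x => hr x z) (fun y => hc y z)
        rfl Finset.sum_comm (hw0 z)
    have hEz : ∀ z, (∑ x, ∑ y, g x y z * π₁ x y z) - (∑ x, ∑ y, g x y z * π₂ x y z)
        ≤ 2 * C * Real.sqrt (2 * wz z * Kz z) := by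
      intro z
      set ν : 𝒳 × 𝒴 → ℝ :=
        fun i => (∑ y, P i.1 y z) * (∑ x, P x i.2 z) / wz z with hν
      have e1 : ∀ (π : 𝒳 → 𝒴 → 𝒵 → ℝ), ∑ x, ∑ y, g x y z * π x y z
          = ∑ i : 𝒳 × 𝒴, g i.1 i.2 z * π i.1 i.2 z := by
        intro π
        rw [Fintype.sum_prod_type]
      have h2 : ∀ (d : 𝒳 × 𝒴 → ℝ), |∑ i, g i.1 i.2 z * d i| ≤ C * ∑ i, |d i| := by
        intro d
        calc |∑ i, g i.1 i.2 z * d i| ≤ ∑ i, |g i.1 i.2 z * d i| :=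
              Finset.abs_sum_le_sum_abs _ _
          _ = ∑ i, |g i.1 i.2 z| * |d i| := by
              exact Finset.sum_congr rfl (fun i _ => abs_mul _ _)
          _ ≤ ∑ i, C * |d i| := Finset.sum_le_sum
              (fun i _ => mul_le_mul_of_nonneg_right (hg _ _ _) (abs_nonneg _))
          _ = C * ∑ i, |d i| := (Finset.mul_sum _ _ _).symm
      have hL1A : ∑ i : 𝒳 × 𝒴, |π₁ i.1 i.2 z - ν i| ≤ Real.sqrt (2 * wz z * Kz z) :=
        hL1 π₁ hπ₁0 hπ₁r hπ₁c z
      have hL1B : ∑ i : 𝒳 × 𝒴, |π₂ i.1 i.2 z - ν i| ≤ Real.sqrt (2 * wz z * Kz z) :=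
        hL1 π₂ hπ₂0 hπ₂r hπ₂c z
      have hA := h2 (fun i => π₁ i.1 i.2 z - ν i)
      have hB := h2 (fun i => π₂ i.1 i.2 z - ν i)
      have hdiff : (∑ i : 𝒳 × 𝒴, g i.1 i.2 z * π₁ i.1 i.2 z)
          - (∑ i : 𝒳 × 𝒴, g i.1 i.2 z * π₂ i.1 i.2 z)
          = (∑ i : 𝒳 × 𝒴, g i.1 i.2 z * (π₁ i.1 i.2 z - ν i))
            - (∑ i : 𝒳 × 𝒴, g i.1 i.2 z * (π₂ i.1 i.2 z - ν i)) := by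
        simp only [mul_sub]
        rw [Finset.sum_sub_distrib, Finset.sum_sub_distrib]
        ring
      rw [e1 π₁, e1 π₂, hdiff]
      have t1 := le_abs_self (∑ i : 𝒳 × 𝒴, g i.1 i.2 z * (π₁ i.1 i.2 z - ν i))
      have t2 := neg_abs_le (∑ i : 𝒳 × 𝒴, g i.1 i.2 z * (π₂ i.1 i.2 z - ν i))
      have m1 := mul_le_mul_of_nonneg_left hL1A hC0
      have m2 := mul_le_mul_of_nonneg_left hL1B hC0
      linarith [hA, hB]
    have hsplit : (∑ x, ∑ y, ∑ z, g x y z * π₁ x y z)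
        - (∑ x, ∑ y, ∑ z, g x y z * π₂ x y z)
        = ∑ z, ((∑ x, ∑ y, g x y z * π₁ x y z) - (∑ x, ∑ y, g x y z * π₂ x y z)) := by
      rw [reorder (fun x y z => g x y z * π₁ x y z),
          reorder (fun x y z => g x y z * π₂ x y z), Finset.sum_sub_distrib]
    rw [hsplit]
    have step1 : ∑ z, ((∑ x, ∑ y, g x y z * π₁ x y z) - (∑ x, ∑ y, g x y z * π₂ x y z))
        ≤ ∑ z, 2 * C * Real.sqrt (2 * wz z * Kz z) :=
      Finset.sum_le_sum (fun z _ => hEz z)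
    have step2 : ∀ z, 2 * C * Real.sqrt (2 * wz z * Kz z)
        = Real.sqrt (8 * C^2) * (Real.sqrt (wz z) * Real.sqrt (Kz z)) := by
      intro z
      rw [show 2 * wz z * Kz z = 2 * (wz z * Kz z) by ring]
      rw [Real.sqrt_mul (by norm_num : (0:ℝ) ≤ 2),
          Real.sqrt_mul (hw0 z).le,
          show (8:ℝ) * C^2 = (2*C)^2 * 2 by ring,
          Real.sqrt_mul (sq_nonneg _), Real.sqrt_sq (by linarith)]
      ring
    have step3 : ∑ z, Real.sqrt (wz z) * Real.sqrt (Kz z)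
        ≤ Real.sqrt (∑ z, Kz z) := by
      have CS := Finset.sum_mul_sq_le_sq_mul_sq Finset.univ
        (fun z => Real.sqrt (wz z)) (fun z => Real.sqrt (Kz z))
      have e2 : ∑ z, Real.sqrt (wz z) ^ 2 = ∑ z, wz z :=
        Finset.sum_congr rfl (fun z _ => Real.sq_sqrt (hw0 z).le)
      have e3 : ∑ z, Real.sqrt (Kz z) ^ 2 = ∑ z, Kz z :=
        Finset.sum_congr rfl (fun z _ => Real.sq_sqrt (hK0 z))
      rw [e2, e3] at CS
      have hw1 : ∑ z, wz z = 1 := by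
        rw [hwz, ← reorder (fun x y z => P x y z)]
        exact hP1
      rw [hw1, one_mul] at CS
      have hnn : 0 ≤ ∑ z, Real.sqrt (wz z) * Real.sqrt (Kz z) :=
        Finset.sum_nonneg (fun z _ => mul_nonneg (Real.sqrt_nonneg _) (Real.sqrt_nonneg _))
      exact (Real.le_sqrt hnn (Finset.sum_nonneg (fun z _ => hK0 z))).2 CS
    have step4 : Real.sqrt (8 * C^2) * Real.sqrt (∑ z, Kz z) ≤ D := by
      rw [← Real.sqrt_mul (by positivity)]
      apply Real.sqrt_le_sqrt
      apply mul_le_mul_of_nonneg_left _ (by positivity)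
      exact le_min (Finset.sum_le_sum (fun z _ => min_le_left _ _))
        (Finset.sum_le_sum (fun z _ => min_le_right _ _))
    calc ∑ z, ((∑ x, ∑ y, g x y z * π₁ x y z) - (∑ x, ∑ y, g x y z * π₂ x y z))
        ≤ ∑ z, 2 * C * Real.sqrt (2 * wz z * Kz z) := step1
      _ = Real.sqrt (8 * C^2) * ∑ z, Real.sqrt (wz z) * Real.sqrt (Kz z) := by
          rw [Finset.mul_sum]
          exact Finset.sum_congr rfl (fun z _ => step2 z)
      _ ≤ Real.sqrt (8 * C^2) * Real.sqrt (∑ z, Kz z) :=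
          mul_le_mul_of_nonneg_left step3 (Real.sqrt_nonneg _)
      _ ≤ D := step4
  have hPmem : (∑ x, ∑ y, ∑ z, g x y z * P x y z) ∈ S :=
    ⟨P, hP0, fun _ _ => rfl, fun _ _ => rfl, rfl⟩
  have hne : S.Nonempty := ⟨_, hPmem⟩
  have h1 : sSup S ≤ sInf S + D := by
    apply csSup_le hne
    intro r hr
    have h2 : r - D ≤ sInf S :=
      le_csInf hne (fun s hs => by linarith [hKey r hr s hs])
    linarith
  linarith
end

section
/- Decomposition of the Fréchet lower bound over values of Z: inf_{π∈Π} E_π[g(X,Y,Z)] = ∑_z P(Z=z) · inf_{π_z ∈ Π_z} E_{π_z}[g(X,Y,z)], where Π_z is the set of couplings on 𝒳×𝒴 with marginals P_{X|Z=z} and P_{Y|Z=z}. -/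
private lemma sum3 {α β γ : Type*} [Fintype α] [Fintype β] [Fintype γ] (f : α → β → γ → ℝ) :
    ∑ x, ∑ y, ∑ z, f x y z = ∑ z, ∑ x, ∑ y, f x y z := by
  calc ∑ x, ∑ y, ∑ z, f x y z = ∑ x, ∑ z, ∑ y, f x y z :=
        Finset.sum_congr rfl fun x _ => Finset.sum_comm
    _ = ∑ z, ∑ x, ∑ y, f x y z := Finset.sum_comm

private lemma aux_inf {ι : Type*} [Fintype ι] (c : ι → ℝ) (hc : ∀ i, 0 < c i)
    (hcsum : ∑ i, c i = 1) (S : ι → Set ℝ) (T : Set ℝ)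
    (hSne : ∀ i, (S i).Nonempty) (hSbd : ∀ i, BddBelow (S i)) (hTbd : BddBelow T)
    (hTmem : ∀ v : ι → ℝ, (∀ i, v i ∈ S i) → (∑ i, c i * v i) ∈ T)
    (hTdec : ∀ r ∈ T, ∃ v : ι → ℝ, (∀ i, v i ∈ S i) ∧ r = ∑ i, c i * v i) :
    sInf T = ∑ i, c i * sInf (S i) := by
  have hTne : T.Nonempty := by
    choose v hv using hSne
    exact ⟨_, hTmem v hv⟩
  refine le_antisymm ?_ ?_
  · refine le_of_forall_pos_le_add fun ε hε => ?_
    have hpick : ∀ i, ∃ a ∈ S i, a < sInf (S i) + ε :=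
      fun i => exists_lt_of_csInf_lt (hSne i) (by linarith)
    choose v hvmem hvlt using hpick
    calc sInf T ≤ ∑ i, c i * v i := csInf_le hTbd (hTmem v hvmem)
      _ ≤ ∑ i, c i * (sInf (S i) + ε) :=
          Finset.sum_le_sum fun i _ => by
            have := hvlt i
            nlinarith [hc i]
      _ = (∑ i, c i * sInf (S i)) + ε := by
          simp [mul_add, Finset.sum_add_distrib, ← Finset.sum_mul, hcsum]
  · refine le_csInf hTne fun r hr => ?_
    obtain ⟨v, hvmem, rfl⟩ := hTdec r hr
    refine Finset.sum_le_sum fun i _ => ?_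
    exact mul_le_mul_of_nonneg_left (csInf_le (hSbd i) (hvmem i)) (hc i).le

theorem stmt18 {𝒳 𝒴 𝒵 : Type*} [Fintype 𝒳] [Fintype 𝒴] [Fintype 𝒵]
    (P : 𝒳 → 𝒴 → 𝒵 → ℝ) (hP0 : ∀ x y z, 0 ≤ P x y z)
    (hP1 : ∑ x, ∑ y, ∑ z, P x y z = 1)
    (hpZ : ∀ z, 0 < ∑ x, ∑ y, P x y z)
    (g : 𝒳 → 𝒴 → 𝒵 → ℝ) :
    sInf {r : ℝ | ∃ π : 𝒳 → 𝒴 → 𝒵 → ℝ, (∀ x y z, 0 ≤ π x y z) ∧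
        (∀ x z, ∑ y, π x y z = ∑ y, P x y z) ∧
        (∀ y z, ∑ x, π x y z = ∑ x, P x y z) ∧
        r = ∑ x, ∑ y, ∑ z, g x y z * π x y z}
    = ∑ z, (∑ x, ∑ y, P x y z) *
        sInf {r : ℝ | ∃ q : 𝒳 → 𝒴 → ℝ, (∀ x y, 0 ≤ q x y) ∧
          (∀ x, ∑ y, q x y = (∑ y, P x y z) / (∑ x', ∑ y', P x' y' z)) ∧
          (∀ y, ∑ x, q x y = (∑ x, P x y z) / (∑ x', ∑ y', P x' y' z)) ∧
          r = ∑ x, ∑ y, g x y z * q x y} := by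
  classical
  have hpne : ∀ z, (∑ x, ∑ y, P x y z) ≠ 0 := fun z => (hpZ z).ne'
  have hpsum : ∑ z, ∑ x, ∑ y, P x y z = 1 := by
    rw [← hP1]; exact (sum3 fun x y z => P x y z).symm
  refine aux_inf (fun z => ∑ x, ∑ y, P x y z) hpZ hpsum
    (fun z => {r : ℝ | ∃ q : 𝒳 → 𝒴 → ℝ, (∀ x y, 0 ≤ q x y) ∧
          (∀ x, ∑ y, q x y = (∑ y, P x y z) / (∑ x', ∑ y', P x' y' z)) ∧
          (∀ y, ∑ x, q x y = (∑ x, P x y z) / (∑ x', ∑ y', P x' y' z)) ∧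
          r = ∑ x, ∑ y, g x y z * q x y}) _ ?_ ?_ ?_ ?_ ?_
  · -- S z nonempty
    intro z
    refine ⟨_, ⟨fun x y => ((∑ y', P x y' z) / (∑ x', ∑ y', P x' y' z)) *
        ((∑ x', P x' y z) / (∑ x', ∑ y', P x' y' z)), ?_, ?_, ?_, rfl⟩⟩
    · intro x y
      have h1 : (0:ℝ) ≤ ∑ y', P x y' z := Finset.sum_nonneg fun _ _ => hP0 _ _ _
      have h2 : (0:ℝ) ≤ ∑ x', P x' y z := Finset.sum_nonneg fun _ _ => hP0 _ _ _
      exact mul_nonneg (div_nonneg h1 (hpZ z).le) (div_nonneg h2 (hpZ z).le)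
    · intro x
      rw [← Finset.mul_sum, ← Finset.sum_div]
      have hcom : ∑ y, ∑ x', P x' y z = ∑ x', ∑ y', P x' y' z := Finset.sum_comm
      rw [hcom, div_self (hpne z), mul_one]
    · intro y
      rw [← Finset.sum_mul, ← Finset.sum_div, div_self (hpne z), one_mul]
  · -- S z bddBelow
    intro z
    refine ⟨-(∑ x, ∑ y, |g x y z|), fun r hr => ?_⟩
    obtain ⟨q, h0, h1, _, rfl⟩ := hr
    have hq1 : ∀ x y, q x y ≤ 1 := by
      intro x y
      have ha : q x y ≤ ∑ y', q x y' :=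
        Finset.single_le_sum (fun y' _ => h0 x y') (Finset.mem_univ y)
      rw [h1 x] at ha
      have hle : (∑ y', P x y' z) ≤ ∑ x', ∑ y', P x' y' z :=
        Finset.single_le_sum (fun x' _ => Finset.sum_nonneg fun y' _ => hP0 x' y' z)
          (Finset.mem_univ x)
      have := (div_le_one (hpZ z)).mpr hle
      linarith
    calc -(∑ x, ∑ y, |g x y z|) = ∑ x, ∑ y, -|g x y z| := by simp
      _ ≤ ∑ x, ∑ y, g x y z * q x y :=
        Finset.sum_le_sum fun x _ => Finset.sum_le_sum fun y _ => by
          nlinarith [h0 x y, hq1 x y, abs_nonneg (g x y z), neg_abs_le (g x y z)]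
  · -- T bddBelow
    refine ⟨-(∑ x, ∑ y, ∑ z, |g x y z|), fun r hr => ?_⟩
    obtain ⟨π, h0, h1, _, rfl⟩ := hr
    have hπ1 : ∀ x y z, π x y z ≤ 1 := by
      intro x y z
      have ha : π x y z ≤ ∑ y', π x y' z :=
        Finset.single_le_sum (fun y' _ => h0 x y' z) (Finset.mem_univ y)
      rw [h1 x z] at ha
      have hle : (∑ y', P x y' z) ≤ ∑ x', ∑ y', P x' y' z :=
        Finset.single_le_sum (fun x' _ => Finset.sum_nonneg fun y' _ => hP0 x' y' z)
          (Finset.mem_univ x)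
      have hle2 : (∑ x', ∑ y', P x' y' z) ≤ ∑ z', ∑ x', ∑ y', P x' y' z' :=
        Finset.single_le_sum
          (fun z' _ => Finset.sum_nonneg fun x' _ => Finset.sum_nonneg fun y' _ => hP0 x' y' z')
          (Finset.mem_univ z)
      rw [hpsum] at hle2
      linarith
    calc -(∑ x, ∑ y, ∑ z, |g x y z|) = ∑ x, ∑ y, ∑ z, -|g x y z| := by simp
      _ ≤ ∑ x, ∑ y, ∑ z, g x y z * π x y z :=
        Finset.sum_le_sum fun x _ => Finset.sum_le_sum fun y _ =>
          Finset.sum_le_sum fun z _ => by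
            nlinarith [h0 x y z, hπ1 x y z, abs_nonneg (g x y z), neg_abs_le (g x y z)]
  · -- hTmem
    intro v hv
    choose q h0 h1 h2 h3 using hv
    refine ⟨fun x y z => (∑ x', ∑ y', P x' y' z) * q z x y, ?_, ?_, ?_, ?_⟩
    · intro x y z; exact mul_nonneg (hpZ z).le (h0 z x y)
    · intro x z
      rw [← Finset.mul_sum, h1 z x, mul_div_cancel₀ _ (hpne z)]
    · intro y z
      rw [← Finset.mul_sum, h2 z y, mul_div_cancel₀ _ (hpne z)]
    · rw [sum3 fun x y z => g x y z * ((∑ x', ∑ y', P x' y' z) * q z x y)]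
      refine Finset.sum_congr rfl fun z _ => ?_
      rw [h3 z, Finset.mul_sum]
      refine Finset.sum_congr rfl fun x _ => ?_
      rw [Finset.mul_sum]
      exact Finset.sum_congr rfl fun y _ => by ring
  · -- hTdec
    rintro r ⟨π, h0, h1, h2, rfl⟩
    refine ⟨fun z => ∑ x, ∑ y, g x y z * (π x y z / (∑ x', ∑ y', P x' y' z)), fun z => ?_, ?_⟩
    · refine ⟨fun x y => π x y z / (∑ x', ∑ y', P x' y' z), ?_, ?_, ?_, rfl⟩
      · intro x y; exact div_nonneg (h0 x y z) (hpZ z).le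
      · intro x; rw [← Finset.sum_div, h1 x z]
      · intro y; rw [← Finset.sum_div, h2 y z]
    · rw [sum3 fun x y z => g x y z * π x y z]
      refine Finset.sum_congr rfl fun z _ => ?_
      rw [Finset.mul_sum]
      refine Finset.sum_congr rfl fun x _ => ?_
      rw [Finset.mul_sum]
      refine Finset.sum_congr rfl fun y _ => ?_
      field_simp
      exact (mul_div_cancel_right₀ _ (hpne z)).symm
end
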